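/- Completeness of the HPL tableau calculus: if φ is valid on all product Kripke frames, then there is a closed tableau with root formula @ᵢ@ₐ¬φ for fresh nominals i, a. -/

import Mathlib

/-- Formulas of two-dimensional hybrid (product) logic. -/
inductive Form (P N1 N2 : Type) : Type
  | prop : P → Form P N1 N2
  | nom1 : N1 → Form P N1 N2
  | nom2 : N2 → Form P N1 N2
  | neg  : Form P N1 N2 → Form P N1 N2
  | and  : Form P N1 N2 → Form P N1 N2 → Form P N1 N2
  | dia1 : Form P N1 N2 → Form P N1 N2
  | dia2 : Form P N1 N2 → Form P N1 N2
  | at1  : N1 → Form P N1 N2 → Form P N1 N2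
  | at2  : N2 → Form P N1 N2 → Form P N1 N2

/-- A product Kripke model: two Kripke frames plus a valuation interpreting
propositional variables as sets of pairs and nominals as named points. -/
structure ProductModel (P N1 N2 W1 W2 : Type) : Type where
  R1 : W1 → W1 → Prop
  R2 : W2 → W2 → Prop
  V  : P → W1 × W2 → Prop
  v1 : N1 → W1
  v2 : N2 → W2

variable {P N1 N2 W1 W2 : Type}

/-- Horizontal accessibility. -/
def ProductModel.Rh (M : ProductModel P N1 N2 W1 W2) (w w' : W1 × W2) : Prop :=
  M.R1 w.1 w'.1 ∧ w.2 = w'.2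

/-- Vertical accessibility. -/
def ProductModel.Rv (M : ProductModel P N1 N2 W1 W2) (w w' : W1 × W2) : Prop :=
  w.1 = w'.1 ∧ M.R2 w.2 w'.2

/-- Satisfaction in a product model. -/
def ProductModel.sat (M : ProductModel P N1 N2 W1 W2) : W1 × W2 → Form P N1 N2 → Prop
  | w, .prop p  => M.V p w
  | w, .nom1 i  => w.1 = M.v1 i
  | w, .nom2 a  => w.2 = M.v2 a
  | w, .neg φ   => ¬ M.sat w φ
  | w, .and φ ψ => M.sat w φ ∧ M.sat w ψ
  | w, .dia1 φ  => ∃ w', M.Rh w w' ∧ M.sat w' φ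
  | w, .dia2 φ  => ∃ w', M.Rv w w' ∧ M.sat w' φ
  | w, .at1 i φ => M.sat (M.v1 i, w.2) φ
  | w, .at2 a φ => M.sat (w.1, M.v2 a) φ

/-- Occurrence of a first-sort nominal in a formula. -/
def occ1 {P N1 N2 : Type} (j : N1) : Form P N1 N2 → Prop
  | .prop _   => False
  | .nom1 i   => i = j
  | .nom2 _   => False
  | .neg φ    => occ1 j φ
  | .and φ ψ  => occ1 j φ ∨ occ1 j ψ
  | .dia1 φ   => occ1 j φ
  | .dia2 φ   => occ1 j φ
  | .at1 i φ  => i = j ∨ occ1 j φ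
  | .at2 _ φ  => occ1 j φ

/-- Occurrence of a second-sort nominal in a formula. -/
def occ2 {P N1 N2 : Type} (b : N2) : Form P N1 N2 → Prop
  | .prop _   => False
  | .nom1 _   => False
  | .nom2 a   => a = b
  | .neg φ    => occ2 b φ
  | .and φ ψ  => occ2 b φ ∨ occ2 b ψ
  | .dia1 φ   => occ2 b φ
  | .dia2 φ   => occ2 b φ
  | .at1 _ φ  => occ2 b φ
  | .at2 a φ  => a = b ∨ occ2 b φ

/-- Hybrid formulas over propositional variables and two sorts of nominals,
all indexed by natural numbers. -/
abbrev F := Form ℕ ℕ ℕ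

/-- A first-sort nominal is fresh for a branch if it occurs in none of its
formulas. -/
def fresh1 (j : ℕ) (L : List F) : Prop := ∀ ψ ∈ L, ¬ occ1 j ψ

/-- A second-sort nominal is fresh for a branch if it occurs in none of its
formulas. -/
def fresh2 (b : ℕ) (L : List F) : Prop := ∀ ψ ∈ L, ¬ occ2 b ψ


/-- A branch (list of formulas, most recent first) is closed if it contains a
contradiction at some prefix. -/
def ClosedL (L : List F) : Prop :=
  (∃ i a φ, Form.at1 i (Form.at2 a φ) ∈ L ∧ Form.at1 i (Form.at2 a (Form.neg φ)) ∈ L) ∨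
  (∃ i φ, Form.at1 i φ ∈ L ∧ Form.at1 i (Form.neg φ) ∈ L) ∨
  (∃ a φ, Form.at2 a φ ∈ L ∧ Form.at2 a (Form.neg φ) ∈ L)

/-- One application of a non-branching HPL tableau rule extending a branch `L`. -/
inductive StepNB : List F → List F → Prop
  | negneg : Form.at1 i (Form.at2 a (Form.neg (Form.neg φ))) ∈ L →
      StepNB L (Form.at1 i (Form.at2 a φ) :: L)
  | and : Form.at1 i (Form.at2 a (Form.and φ ψ)) ∈ L →
      StepNB L (Form.at1 i (Form.at2 a ψ) :: Form.at1 i (Form.at2 a φ) :: L)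
  | dia1 : Form.at1 i (Form.at2 a (Form.dia1 φ)) ∈ L → fresh1 j L →
      StepNB L (Form.at1 j (Form.at2 a φ) :: Form.at1 i (Form.dia1 (Form.nom1 j)) :: L)
  | dia2 : Form.at1 i (Form.at2 a (Form.dia2 φ)) ∈ L → fresh2 b L →
      StepNB L (Form.at1 i (Form.at2 b φ) :: Form.at2 a (Form.dia2 (Form.nom2 b)) :: L)
  | negDia1 : Form.at1 i (Form.at2 a (Form.neg (Form.dia1 φ))) ∈ L →
      Form.at1 i (Form.dia1 (Form.nom1 j)) ∈ L →
      StepNB L (Form.at1 j (Form.at2 a (Form.neg φ)) :: L)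
  | negDia2 : Form.at1 i (Form.at2 a (Form.neg (Form.dia2 φ))) ∈ L →
      Form.at2 a (Form.dia2 (Form.nom2 b)) ∈ L →
      StepNB L (Form.at1 i (Form.at2 b (Form.neg φ)) :: L)
  | at1 : Form.at1 i (Form.at2 a (Form.at1 j φ)) ∈ L →
      StepNB L (Form.at1 j (Form.at2 a φ) :: L)
  | at2 : Form.at1 i (Form.at2 a (Form.at2 b φ)) ∈ L →
      StepNB L (Form.at1 i (Form.at2 b φ) :: L)
  | negAt1 : Form.at1 i (Form.at2 a (Form.neg (Form.at1 j φ))) ∈ L →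
      StepNB L (Form.at1 j (Form.at2 a (Form.neg φ)) :: L)
  | negAt2 : Form.at1 i (Form.at2 a (Form.neg (Form.at2 b φ))) ∈ L →
      StepNB L (Form.at1 i (Form.at2 b (Form.neg φ)) :: L)
  | red1a : Form.at1 i (Form.at2 a (Form.nom1 k)) ∈ L →
      StepNB L (Form.at1 i (Form.nom1 k) :: L)
  | red1b : Form.at1 i (Form.at2 a (Form.neg (Form.nom1 k))) ∈ L →
      StepNB L (Form.at1 i (Form.neg (Form.nom1 k)) :: L)
  | red2a : Form.at1 i (Form.at2 a (Form.nom2 c)) ∈ L →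
      StepNB L (Form.at2 a (Form.nom2 c) :: L)
  | red2b : Form.at1 i (Form.at2 a (Form.neg (Form.nom2 c))) ∈ L →
      StepNB L (Form.at2 a (Form.neg (Form.nom2 c)) :: L)
  | neg1 : Form.at1 i (Form.neg (Form.nom1 j)) ∈ L →
      StepNB L (Form.at1 j (Form.nom1 j) :: L)
  | neg2 : Form.at2 a (Form.neg (Form.nom2 b)) ∈ L →
      StepNB L (Form.at2 b (Form.nom2 b) :: L)
  | id1 : Form.at1 i (Form.at2 a φ) ∈ L → Form.at1 i (Form.nom1 j) ∈ L →
      StepNB L (Form.at1 j (Form.at2 a φ) :: L)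
  | id2 : Form.at1 i (Form.at2 a φ) ∈ L → Form.at2 a (Form.nom2 b) ∈ L →
      StepNB L (Form.at1 i (Form.at2 b φ) :: L)
  | id'1a : Form.at1 i (Form.nom1 k) ∈ L → Form.at1 i (Form.nom1 j) ∈ L →
      StepNB L (Form.at1 j (Form.nom1 k) :: L)
  | id'1b : Form.at1 i (Form.neg (Form.nom1 k)) ∈ L → Form.at1 i (Form.nom1 j) ∈ L →
      StepNB L (Form.at1 j (Form.neg (Form.nom1 k)) :: L)
  | id'2a : Form.at2 a (Form.nom2 c) ∈ L → Form.at2 a (Form.nom2 b) ∈ L →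
      StepNB L (Form.at2 b (Form.nom2 c) :: L)
  | id'2b : Form.at2 a (Form.neg (Form.nom2 c)) ∈ L → Form.at2 a (Form.nom2 b) ∈ L →
      StepNB L (Form.at2 b (Form.neg (Form.nom2 c)) :: L)


/-- `ClosedTab L`: the branch `L` can be extended, by the HPL tableau rules,
to a finite tableau (tree) all of whose branches are closed.  The branching
rule `[¬∧]` requires both of the resulting branches to be closed. -/
inductive ClosedTab : List F → Prop
  | closed : ClosedL L → ClosedTab L
  | step : StepNB L L' → ClosedTab L' → ClosedTab L
  | split : Form.at1 i (Form.at2 a (Form.neg (Form.and φ ψ))) ∈ L →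
      ClosedTab (Form.at1 i (Form.at2 a (Form.neg φ)) :: L) →
      ClosedTab (Form.at1 i (Form.at2 a (Form.neg ψ)) :: L) →
      ClosedTab L

section Bounds

/-- Strict bound on first-sort nominals occurring in a formula. -/
def bound1 : F → ℕ
  | .prop _ => 0
  | .nom1 i => i + 1
  | .nom2 _ => 0
  | .neg ψ => bound1 ψ
  | .and ψ χ => max (bound1 ψ) (bound1 χ)
  | .dia1 ψ => bound1 ψ
  | .dia2 ψ => bound1 ψ
  | .at1 i ψ => max (i + 1) (bound1 ψ)
  | .at2 _ ψ => bound1 ψ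

/-- Strict bound on second-sort nominals occurring in a formula. -/
def bound2 : F → ℕ
  | .prop _ => 0
  | .nom1 _ => 0
  | .nom2 a => a + 1
  | .neg ψ => bound2 ψ
  | .and ψ χ => max (bound2 ψ) (bound2 χ)
  | .dia1 ψ => bound2 ψ
  | .dia2 ψ => bound2 ψ
  | .at1 _ ψ => bound2 ψ
  | .at2 a ψ => max (a + 1) (bound2 ψ)

lemma occ1_lt_bound1 {j : ℕ} : ∀ {ψ : F}, occ1 j ψ → j < bound1 ψ
  | .prop _, h => h.elim
  | .nom1 i, h => by
      have h' : i = j := h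
      subst h'; exact Nat.lt_succ_self _
  | .nom2 _, h => h.elim
  | .neg ψ, h => occ1_lt_bound1 (ψ := ψ) h
  | .and ψ χ, h => by
      rcases (h : occ1 j ψ ∨ occ1 j χ) with h | h
      · exact lt_of_lt_of_le (occ1_lt_bound1 h) (le_max_left _ _)
      · exact lt_of_lt_of_le (occ1_lt_bound1 h) (le_max_right _ _)
  | .dia1 ψ, h => occ1_lt_bound1 (ψ := ψ) h
  | .dia2 ψ, h => occ1_lt_bound1 (ψ := ψ) h
  | .at1 i ψ, h => by
      rcases (h : i = j ∨ occ1 j ψ) with rfl | h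
      · exact lt_of_lt_of_le (Nat.lt_succ_self _) (le_max_left _ _)
      · exact lt_of_lt_of_le (occ1_lt_bound1 h) (le_max_right _ _)
  | .at2 _ ψ, h => occ1_lt_bound1 (ψ := ψ) h

lemma occ2_lt_bound2 {b : ℕ} : ∀ {ψ : F}, occ2 b ψ → b < bound2 ψ
  | .prop _, h => h.elim
  | .nom1 _, h => h.elim
  | .nom2 a, h => by
      have h' : a = b := h
      subst h'; exact Nat.lt_succ_self _
  | .neg ψ, h => occ2_lt_bound2 (ψ := ψ) h
  | .and ψ χ, h => by
      rcases (h : occ2 b ψ ∨ occ2 b χ) with h | h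
      · exact lt_of_lt_of_le (occ2_lt_bound2 h) (le_max_left _ _)
      · exact lt_of_lt_of_le (occ2_lt_bound2 h) (le_max_right _ _)
  | .dia1 ψ, h => occ2_lt_bound2 (ψ := ψ) h
  | .dia2 ψ, h => occ2_lt_bound2 (ψ := ψ) h
  | .at1 _ ψ, h => occ2_lt_bound2 (ψ := ψ) h
  | .at2 a ψ, h => by
      rcases (h : a = b ∨ occ2 b ψ) with rfl | h
      · exact lt_of_lt_of_le (Nat.lt_succ_self _) (le_max_left _ _)
      · exact lt_of_lt_of_le (occ2_lt_bound2 h) (le_max_right _ _)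

/-- A nominal bound for a whole branch. -/
def bound1L (L : List F) : ℕ := L.foldr (fun ψ n => max (bound1 ψ) n) 0

def bound2L (L : List F) : ℕ := L.foldr (fun ψ n => max (bound2 ψ) n) 0

lemma bound1_le_bound1L {ψ : F} : ∀ {L : List F}, ψ ∈ L → bound1 ψ ≤ bound1L L
  | χ :: L, h => by
      rcases List.mem_cons.mp h with rfl | h
      · exact le_max_left _ _
      · exact le_trans (bound1_le_bound1L h) (le_max_right _ _)

lemma bound2_le_bound2L {ψ : F} : ∀ {L : List F}, ψ ∈ L → bound2 ψ ≤ bound2L L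
  | χ :: L, h => by
      rcases List.mem_cons.mp h with rfl | h
      · exact le_max_left _ _
      · exact le_trans (bound2_le_bound2L h) (le_max_right _ _)

lemma fresh1_bound1L (L : List F) : fresh1 (bound1L L) L := by
  intro ψ hmem hocc
  exact absurd (lt_of_lt_of_le (occ1_lt_bound1 hocc) (bound1_le_bound1L hmem)) (lt_irrefl _)

lemma fresh2_bound2L (L : List F) : fresh2 (bound2L L) L := by
  intro ψ hmem hocc
  exact absurd (lt_of_lt_of_le (occ2_lt_bound2 hocc) (bound2_le_bound2L hmem)) (lt_irrefl _)

end Bounds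
section Steps

open Classical in
/-- One-premise saturation step: given a premise formula, produce the
extension of the branch by the (unique) applicable non-branching rule, or
(for `¬∧`) by a consistently chosen branch of the splitting rule. -/
noncomputable def step1 (ψ : F) (L : List F) : List F :=
  match ψ with
  | .at1 i (.at2 a (.neg (.neg φ))) => .at1 i (.at2 a φ) :: L
  | .at1 i (.at2 a (.and φ χ)) => .at1 i (.at2 a χ) :: .at1 i (.at2 a φ) :: L
  | .at1 i (.at2 a (.neg (.and φ χ))) =>
      if ClosedTab (.at1 i (.at2 a (.neg φ)) :: L) then .at1 i (.at2 a (.neg χ)) :: L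
      else .at1 i (.at2 a (.neg φ)) :: L
  | .at1 i (.at2 a (.dia1 φ)) =>
      .at1 (bound1L L) (.at2 a φ) :: .at1 i (.dia1 (.nom1 (bound1L L))) :: L
  | .at1 i (.at2 a (.dia2 φ)) =>
      .at1 i (.at2 (bound2L L) φ) :: .at2 a (.dia2 (.nom2 (bound2L L))) :: L
  | .at1 _ (.at2 a (.at1 j φ)) => .at1 j (.at2 a φ) :: L
  | .at1 i (.at2 _ (.at2 b φ)) => .at1 i (.at2 b φ) :: L
  | .at1 _ (.at2 a (.neg (.at1 j φ))) => .at1 j (.at2 a (.neg φ)) :: L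
  | .at1 i (.at2 _ (.neg (.at2 b φ))) => .at1 i (.at2 b (.neg φ)) :: L
  | .at1 i (.at2 _ (.nom1 k)) => .at1 i (.nom1 k) :: L
  | .at1 i (.at2 _ (.neg (.nom1 k))) => .at1 i (.neg (.nom1 k)) :: L
  | .at1 _ (.at2 a (.nom2 c)) => .at2 a (.nom2 c) :: L
  | .at1 _ (.at2 a (.neg (.nom2 c))) => .at2 a (.neg (.nom2 c)) :: L
  | .at1 _ (.neg (.nom1 j)) => .at1 j (.nom1 j) :: L
  | .at2 _ (.neg (.nom2 b)) => .at2 b (.nom2 b) :: L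
  | _ => L

/-- Two-premise saturation step. -/
def step2 (ψ₁ ψ₂ : F) (L : List F) : List F :=
  match ψ₁, ψ₂ with
  | .at1 i (.at2 a φ), .at1 i' (.nom1 j) =>
      if i' = i then .at1 j (.at2 a φ) :: L else L
  | .at1 i (.at2 a φ), .at2 a' (.nom2 b) =>
      if a' = a then .at1 i (.at2 b φ) :: L else L
  | .at1 i (.at2 a (.neg (.dia1 φ))), .at1 i' (.dia1 (.nom1 j)) =>
      if i' = i then .at1 j (.at2 a (.neg φ)) :: L else L
  | .at1 i (.at2 a (.neg (.dia2 φ))), .at2 a' (.dia2 (.nom2 b)) =>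
      if a' = a then .at1 i (.at2 b (.neg φ)) :: L else L
  | .at1 i (.nom1 k), .at1 i' (.nom1 j) =>
      if i' = i then .at1 j (.nom1 k) :: L else L
  | .at1 i (.neg (.nom1 k)), .at1 i' (.nom1 j) =>
      if i' = i then .at1 j (.neg (.nom1 k)) :: L else L
  | .at2 a (.nom2 c), .at2 a' (.nom2 b) =>
      if a' = a then .at2 b (.nom2 c) :: L else L
  | .at2 a (.neg (.nom2 c)), .at2 a' (.nom2 b) =>
      if a' = a then .at2 b (.neg (.nom2 c)) :: L else L
  | _, _ => L

lemma step1_closed {ψ : F} {L : List F} (hm : ψ ∈ L) (h : ClosedTab (step1 ψ L)) :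
    ClosedTab L := by
  unfold step1 at h
  split at h <;>
    first
      | exact h
      | exact ClosedTab.step (StepNB.negneg hm) h
      | exact ClosedTab.step (StepNB.and hm) h
      | exact ClosedTab.step (StepNB.dia1 hm (fresh1_bound1L L)) h
      | exact ClosedTab.step (StepNB.dia2 hm (fresh2_bound2L L)) h
      | exact ClosedTab.step (StepNB.at1 hm) h
      | exact ClosedTab.step (StepNB.at2 hm) h
      | exact ClosedTab.step (StepNB.negAt1 hm) h
      | exact ClosedTab.step (StepNB.negAt2 hm) h
      | exact ClosedTab.step (StepNB.red1a hm) h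
      | exact ClosedTab.step (StepNB.red1b hm) h
      | exact ClosedTab.step (StepNB.red2a hm) h
      | exact ClosedTab.step (StepNB.red2b hm) h
      | exact ClosedTab.step (StepNB.neg1 hm) h
      | exact ClosedTab.step (StepNB.neg2 hm) h
      | (split at h
         · exact ClosedTab.split hm ‹_› h
         · exact absurd h ‹_›)

lemma step2_closed {ψ₁ ψ₂ : F} {L : List F} (hm₁ : ψ₁ ∈ L) (hm₂ : ψ₂ ∈ L)
    (h : ClosedTab (step2 ψ₁ ψ₂ L)) : ClosedTab L := by
  unfold step2 at h
  split at h <;>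
    first
      | exact h
      | (split at h
         · rename_i heq
           first
             | exact ClosedTab.step (StepNB.id1 hm₁ (heq ▸ hm₂)) h
             | exact ClosedTab.step (StepNB.id2 hm₁ (heq ▸ hm₂)) h
             | exact ClosedTab.step (StepNB.negDia1 hm₁ (heq ▸ hm₂)) h
             | exact ClosedTab.step (StepNB.negDia2 hm₁ (heq ▸ hm₂)) h
             | exact ClosedTab.step (StepNB.id'1a hm₁ (heq ▸ hm₂)) h
             | exact ClosedTab.step (StepNB.id'1b hm₁ (heq ▸ hm₂)) h
             | exact ClosedTab.step (StepNB.id'2a hm₁ (heq ▸ hm₂)) h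
             | exact ClosedTab.step (StepNB.id'2b hm₁ (heq ▸ hm₂)) h
         · exact h)

lemma step1_suffix (ψ : F) (L : List F) : L <:+ step1 ψ L := by
  unfold step1
  split <;>
    first
      | exact List.suffix_refl _
      | exact List.suffix_cons _ _
      | exact (List.suffix_cons _ _).trans (List.suffix_cons _ _)
      | (split <;> exact List.suffix_cons _ _)

lemma step2_suffix (ψ₁ ψ₂ : F) (L : List F) : L <:+ step2 ψ₁ ψ₂ L := by
  unfold step2
  split <;>
    first
      | exact List.suffix_refl _
      | (split <;> first | exact List.suffix_refl _ | exact List.suffix_cons _ _)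

end Steps
section Seq

/-- Apply the task coded by `(k₁, k₂, t)` to the branch `L`: the premises are
looked up at positions `k₁`, `k₂` from the root end of the branch. -/
noncomputable def applyT (k₁ k₂ t : ℕ) (L : List F) : List F :=
  match L.reverse[k₁]?, L.reverse[k₂]? with
  | some ψ₁, some ψ₂ => if t = 0 then step1 ψ₁ L else step2 ψ₁ ψ₂ L
  | _, _ => L

lemma mem_of_rev_idx {L : List F} {k : ℕ} {ψ : F} (h : L.reverse[k]? = some ψ) : ψ ∈ L := by
  obtain ⟨hk, he⟩ := List.getElem?_eq_some_iff.mp h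
  exact List.mem_reverse.mp (he ▸ List.getElem_mem hk)

lemma applyT_closed {k₁ k₂ t : ℕ} {L : List F} (h : ClosedTab (applyT k₁ k₂ t L)) :
    ClosedTab L := by
  unfold applyT at h
  split at h
  · rename_i ψ₁ ψ₂ h₁ h₂
    split at h
    · exact step1_closed (mem_of_rev_idx h₁) h
    · exact step2_closed (mem_of_rev_idx h₁) (mem_of_rev_idx h₂) h
  · exact h

lemma applyT_suffix (k₁ k₂ t : ℕ) (L : List F) : L <:+ applyT k₁ k₂ t L := by
  unfold applyT
  split
  · split
    · exact step1_suffix _ _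
    · exact step2_suffix _ _ _
  · exact List.suffix_refl _

variable (root : F)

/-- The fair saturation sequence starting from the singleton branch `[root]`. -/
noncomputable def seq : ℕ → List F
  | 0 => [root]
  | n + 1 =>
      applyT (Nat.unpair (Nat.unpair n).2).1
        (Nat.unpair (Nat.unpair (Nat.unpair n).2).2).1
        (Nat.unpair (Nat.unpair (Nat.unpair n).2).2).2 (seq n)

/-- The limit branch. -/
def theta : Set F := {ψ | ∃ n, ψ ∈ seq root n}

lemma seq_suffix {m n : ℕ} (h : m ≤ n) : seq root m <:+ seq root n := by
  induction n with
  | zero => rw [Nat.le_zero.mp h]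
  | succ n ih =>
      rcases Nat.lt_or_ge m (n + 1) with h' | h'
      · exact (ih (Nat.lt_succ_iff.mp h')).trans (by rw [seq]; exact applyT_suffix _ _ _ _)
      · rw [le_antisymm h h']

lemma mem_seq_mono {m n : ℕ} (h : m ≤ n) {ψ : F} (hm : ψ ∈ seq root m) : ψ ∈ seq root n :=
  (seq_suffix root h).subset hm

lemma rev_idx_mono {m n : ℕ} (h : m ≤ n) {k : ℕ} {ψ : F}
    (hk : (seq root m).reverse[k]? = some ψ) : (seq root n).reverse[k]? = some ψ := by
  obtain ⟨pre, hpre⟩ := seq_suffix root h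
  obtain ⟨hlt, _⟩ := List.getElem?_eq_some_iff.mp hk
  rw [← hpre, List.reverse_append, List.getElem?_append_left (by simpa using Nat.lt_of_lt_of_le hlt (by simp))]
  exact hk

lemma seq_fire (m k₁ k₂ t : ℕ) :
    ∃ n, m ≤ n ∧ seq root (n + 1) = applyT k₁ k₂ t (seq root n) := by
  refine ⟨Nat.pair m (Nat.pair k₁ (Nat.pair k₂ t)), Nat.left_le_pair _ _, ?_⟩
  rw [seq]
  simp [Nat.unpair_pair]

lemma fire1 {ψ₁ : F} (h₁ : ψ₁ ∈ theta root) :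
    ∃ n, seq root (n + 1) = step1 ψ₁ (seq root n) := by
  obtain ⟨m, hm⟩ := h₁
  obtain ⟨k, hk⟩ := List.getElem?_of_mem (List.mem_reverse.mpr hm)
  obtain ⟨n, hmn, hn⟩ := seq_fire root m k k 0
  have hk' := rev_idx_mono root hmn hk
  refine ⟨n, ?_⟩
  rw [hn]
  unfold applyT
  rw [hk']
  simp

lemma fire2 {ψ₁ ψ₂ : F} (h₁ : ψ₁ ∈ theta root) (h₂ : ψ₂ ∈ theta root) :
    ∃ n, seq root (n + 1) = step2 ψ₁ ψ₂ (seq root n) := by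
  obtain ⟨m₁, hm₁⟩ := h₁
  obtain ⟨m₂, hm₂⟩ := h₂
  obtain ⟨k₁, hk₁⟩ := List.getElem?_of_mem (List.mem_reverse.mpr hm₁)
  obtain ⟨k₂, hk₂⟩ := List.getElem?_of_mem (List.mem_reverse.mpr hm₂)
  obtain ⟨n, hmn, hn⟩ := seq_fire root (max m₁ m₂) k₁ k₂ 1
  have hk₁' := rev_idx_mono root (le_trans (le_max_left _ _) hmn) hk₁
  have hk₂' := rev_idx_mono root (le_trans (le_max_right _ _) hmn) hk₂
  refine ⟨n, ?_⟩
  rw [hn]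
  unfold applyT
  rw [hk₁', hk₂']
  simp

lemma seq_con (hroot : ¬ ClosedTab [root]) : ∀ n, ¬ ClosedTab (seq root n)
  | 0 => hroot
  | n + 1 => fun h => seq_con hroot n (applyT_closed (by rwa [seq] at h))

lemma theta_stage : ∀ {L : List F}, (∀ ψ ∈ L, ψ ∈ theta root) → ∃ n, ∀ ψ ∈ L, ψ ∈ seq root n
  | [], _ => ⟨0, by simp⟩
  | χ :: L, hL => by
      obtain ⟨n, hn⟩ := theta_stage (L := L) (fun ψ h => hL ψ (List.mem_cons_of_mem _ h))
      obtain ⟨m, hm⟩ := hL χ (List.mem_cons_self)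
      refine ⟨max m n, ?_⟩
      intro ψ h
      rcases List.mem_cons.mp h with rfl | h
      · exact mem_seq_mono root (le_max_left _ _) hm
      · exact mem_seq_mono root (le_max_right _ _) (hn ψ h)

lemma theta_not_closedL (hroot : ¬ ClosedTab [root]) {L : List F}
    (hL : ∀ ψ ∈ L, ψ ∈ theta root) : ¬ ClosedL L := by
  intro hcl
  obtain ⟨n, hn⟩ := theta_stage root hL
  have hcl' : ClosedL (seq root n) := by
    rcases hcl with ⟨i, a, ψ, h₁, h₂⟩ | ⟨i, ψ, h₁, h₂⟩ | ⟨a, ψ, h₁, h₂⟩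
    · exact Or.inl ⟨i, a, ψ, hn _ h₁, hn _ h₂⟩
    · exact Or.inr (Or.inl ⟨i, ψ, hn _ h₁, hn _ h₂⟩)
    · exact Or.inr (Or.inr ⟨a, ψ, hn _ h₁, hn _ h₂⟩)
  exact seq_con root hroot n (ClosedTab.closed hcl')

end Seq
section GoodDef

/-- A saturated open branch (abstract Hintikka-type conditions). -/
structure Good (Θ : Set F) : Prop where
  negneg : ∀ {i a φ}, Form.at1 i (Form.at2 a (Form.neg (Form.neg φ))) ∈ Θ →
    Form.at1 i (Form.at2 a φ) ∈ Θ
  andR : ∀ {i a φ ψ}, Form.at1 i (Form.at2 a (Form.and φ ψ)) ∈ Θ →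
    Form.at1 i (Form.at2 a φ) ∈ Θ ∧ Form.at1 i (Form.at2 a ψ) ∈ Θ
  negand : ∀ {i a φ ψ}, Form.at1 i (Form.at2 a (Form.neg (Form.and φ ψ))) ∈ Θ →
    Form.at1 i (Form.at2 a (Form.neg φ)) ∈ Θ ∨ Form.at1 i (Form.at2 a (Form.neg ψ)) ∈ Θ
  dia1R : ∀ {i a φ}, Form.at1 i (Form.at2 a (Form.dia1 φ)) ∈ Θ →
    ∃ j, Form.at1 i (Form.dia1 (Form.nom1 j)) ∈ Θ ∧ Form.at1 j (Form.at2 a φ) ∈ Θ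
  dia2R : ∀ {i a φ}, Form.at1 i (Form.at2 a (Form.dia2 φ)) ∈ Θ →
    ∃ b, Form.at2 a (Form.dia2 (Form.nom2 b)) ∈ Θ ∧ Form.at1 i (Form.at2 b φ) ∈ Θ
  negDia1 : ∀ {i a φ j}, Form.at1 i (Form.at2 a (Form.neg (Form.dia1 φ))) ∈ Θ →
    Form.at1 i (Form.dia1 (Form.nom1 j)) ∈ Θ → Form.at1 j (Form.at2 a (Form.neg φ)) ∈ Θ
  negDia2 : ∀ {i a φ b}, Form.at1 i (Form.at2 a (Form.neg (Form.dia2 φ))) ∈ Θ →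
    Form.at2 a (Form.dia2 (Form.nom2 b)) ∈ Θ → Form.at1 i (Form.at2 b (Form.neg φ)) ∈ Θ
  at1R : ∀ {i a j φ}, Form.at1 i (Form.at2 a (Form.at1 j φ)) ∈ Θ →
    Form.at1 j (Form.at2 a φ) ∈ Θ
  at2R : ∀ {i a b φ}, Form.at1 i (Form.at2 a (Form.at2 b φ)) ∈ Θ →
    Form.at1 i (Form.at2 b φ) ∈ Θ
  negAt1 : ∀ {i a j φ}, Form.at1 i (Form.at2 a (Form.neg (Form.at1 j φ))) ∈ Θ →
    Form.at1 j (Form.at2 a (Form.neg φ)) ∈ Θ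
  negAt2 : ∀ {i a b φ}, Form.at1 i (Form.at2 a (Form.neg (Form.at2 b φ))) ∈ Θ →
    Form.at1 i (Form.at2 b (Form.neg φ)) ∈ Θ
  red1a : ∀ {i a k}, Form.at1 i (Form.at2 a (Form.nom1 k)) ∈ Θ →
    Form.at1 i (Form.nom1 k) ∈ Θ
  red1b : ∀ {i a k}, Form.at1 i (Form.at2 a (Form.neg (Form.nom1 k))) ∈ Θ →
    Form.at1 i (Form.neg (Form.nom1 k)) ∈ Θ
  red2a : ∀ {i a c}, Form.at1 i (Form.at2 a (Form.nom2 c)) ∈ Θ →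
    Form.at2 a (Form.nom2 c) ∈ Θ
  red2b : ∀ {i a c}, Form.at1 i (Form.at2 a (Form.neg (Form.nom2 c))) ∈ Θ →
    Form.at2 a (Form.neg (Form.nom2 c)) ∈ Θ
  neg1 : ∀ {i j}, Form.at1 i (Form.neg (Form.nom1 j)) ∈ Θ → Form.at1 j (Form.nom1 j) ∈ Θ
  neg2 : ∀ {a b}, Form.at2 a (Form.neg (Form.nom2 b)) ∈ Θ → Form.at2 b (Form.nom2 b) ∈ Θ
  id1 : ∀ {i a φ j}, Form.at1 i (Form.at2 a φ) ∈ Θ → Form.at1 i (Form.nom1 j) ∈ Θ →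
    Form.at1 j (Form.at2 a φ) ∈ Θ
  id2 : ∀ {i a φ b}, Form.at1 i (Form.at2 a φ) ∈ Θ → Form.at2 a (Form.nom2 b) ∈ Θ →
    Form.at1 i (Form.at2 b φ) ∈ Θ
  idp1a : ∀ {i k j}, Form.at1 i (Form.nom1 k) ∈ Θ → Form.at1 i (Form.nom1 j) ∈ Θ →
    Form.at1 j (Form.nom1 k) ∈ Θ
  idp1b : ∀ {i k j}, Form.at1 i (Form.neg (Form.nom1 k)) ∈ Θ → Form.at1 i (Form.nom1 j) ∈ Θ →
    Form.at1 j (Form.neg (Form.nom1 k)) ∈ Θ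
  idp2a : ∀ {a c b}, Form.at2 a (Form.nom2 c) ∈ Θ → Form.at2 a (Form.nom2 b) ∈ Θ →
    Form.at2 b (Form.nom2 c) ∈ Θ
  idp2b : ∀ {a c b}, Form.at2 a (Form.neg (Form.nom2 c)) ∈ Θ → Form.at2 a (Form.nom2 b) ∈ Θ →
    Form.at2 b (Form.neg (Form.nom2 c)) ∈ Θ
  open0 : ∀ {i a φ}, Form.at1 i (Form.at2 a φ) ∈ Θ →
    Form.at1 i (Form.at2 a (Form.neg φ)) ∈ Θ → False
  open1 : ∀ {i φ}, Form.at1 i φ ∈ Θ → Form.at1 i (Form.neg φ) ∈ Θ → False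
  open2 : ∀ {a φ}, Form.at2 a φ ∈ Θ → Form.at2 a (Form.neg φ) ∈ Θ → False

end GoodDef

section GoodTheta

variable (root : F)

lemma head_theta {n : ℕ} {χ : F} {L : List F} (h : seq root n = χ :: L) : χ ∈ theta root :=
  ⟨n, h ▸ List.mem_cons_self⟩

lemma snd_theta {n : ℕ} {χ χ' : F} {L : List F} (h : seq root n = χ' :: χ :: L) :
    χ ∈ theta root :=
  ⟨n, h ▸ List.mem_cons_of_mem _ (List.mem_cons_self)⟩

open Classical in
lemma good_theta (hroot : ¬ ClosedTab [root]) : Good (theta root) := by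
  have o1 : ∀ {i : ℕ} {φ : F}, Form.at1 i φ ∈ theta root →
      Form.at1 i (Form.neg φ) ∈ theta root → False := by
    intro i φ h₁ h₂
    refine theta_not_closedL root hroot
      (L := [Form.at1 i φ, Form.at1 i (Form.neg φ)]) ?_ ?_
    · intro ψ h
      rcases List.mem_cons.mp h with rfl | h
      · exact h₁
      · rcases List.mem_cons.mp h with rfl | h
        · exact h₂
        · cases h
    · exact Or.inr (Or.inl ⟨i, φ, by simp, by simp⟩)
  have o2 : ∀ {a : ℕ} {φ : F}, Form.at2 a φ ∈ theta root →
      Form.at2 a (Form.neg φ) ∈ theta root → False := by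
    intro a φ h₁ h₂
    refine theta_not_closedL root hroot
      (L := [Form.at2 a φ, Form.at2 a (Form.neg φ)]) ?_ ?_
    · intro ψ h
      rcases List.mem_cons.mp h with rfl | h
      · exact h₁
      · rcases List.mem_cons.mp h with rfl | h
        · exact h₂
        · cases h
    · exact Or.inr (Or.inr ⟨a, φ, by simp, by simp⟩)
  refine
    { negneg := ?_, andR := ?_, negand := ?_, dia1R := ?_, dia2R := ?_,
      negDia1 := ?_, negDia2 := ?_, at1R := ?_, at2R := ?_, negAt1 := ?_, negAt2 := ?_,
      red1a := ?_, red1b := ?_, red2a := ?_, red2b := ?_, neg1 := ?_, neg2 := ?_,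
      id1 := ?_, id2 := ?_, idp1a := ?_, idp1b := ?_, idp2a := ?_, idp2b := ?_,
      open0 := ?_, open1 := @o1, open2 := @o2 }
  · intro i a φ h
    obtain ⟨n, hn⟩ := fire1 root h
    exact head_theta root hn
  · intro i a φ ψ h
    obtain ⟨n, hn⟩ := fire1 root h
    exact ⟨snd_theta root hn, head_theta root hn⟩
  · intro i a φ ψ h
    obtain ⟨n, hn⟩ := fire1 root h
    rw [show step1 (Form.at1 i (Form.at2 a (Form.neg (Form.and φ ψ)))) (seq root n) =
        if ClosedTab (Form.at1 i (Form.at2 a (Form.neg φ)) :: seq root n) then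
          Form.at1 i (Form.at2 a (Form.neg ψ)) :: seq root n
        else Form.at1 i (Form.at2 a (Form.neg φ)) :: seq root n from rfl] at hn
    split at hn
    · exact Or.inr (head_theta root hn)
    · exact Or.inl (head_theta root hn)
  · intro i a φ h
    obtain ⟨n, hn⟩ := fire1 root h
    exact ⟨bound1L (seq root n), snd_theta root hn, head_theta root hn⟩
  · intro i a φ h
    obtain ⟨n, hn⟩ := fire1 root h
    exact ⟨bound2L (seq root n), snd_theta root hn, head_theta root hn⟩
  · intro i a φ j h₁ h₂
    obtain ⟨n, hn⟩ := fire2 root h₁ h₂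
    rw [show step2 (Form.at1 i (Form.at2 a (Form.neg (Form.dia1 φ))))
        (Form.at1 i (Form.dia1 (Form.nom1 j))) (seq root n) =
        Form.at1 j (Form.at2 a (Form.neg φ)) :: seq root n from by simp [step2]] at hn
    exact head_theta root hn
  · intro i a φ b h₁ h₂
    obtain ⟨n, hn⟩ := fire2 root h₁ h₂
    rw [show step2 (Form.at1 i (Form.at2 a (Form.neg (Form.dia2 φ))))
        (Form.at2 a (Form.dia2 (Form.nom2 b))) (seq root n) =
        Form.at1 i (Form.at2 b (Form.neg φ)) :: seq root n from by simp [step2]] at hn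
    exact head_theta root hn
  · intro i a j φ h
    obtain ⟨n, hn⟩ := fire1 root h
    exact head_theta root hn
  · intro i a b φ h
    obtain ⟨n, hn⟩ := fire1 root h
    exact head_theta root hn
  · intro i a j φ h
    obtain ⟨n, hn⟩ := fire1 root h
    exact head_theta root hn
  · intro i a b φ h
    obtain ⟨n, hn⟩ := fire1 root h
    exact head_theta root hn
  · intro i a k h
    obtain ⟨n, hn⟩ := fire1 root h
    exact head_theta root hn
  · intro i a k h
    obtain ⟨n, hn⟩ := fire1 root h
    exact head_theta root hn
  · intro i a c h
    obtain ⟨n, hn⟩ := fire1 root h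
    exact head_theta root hn
  · intro i a c h
    obtain ⟨n, hn⟩ := fire1 root h
    exact head_theta root hn
  · intro i j h
    obtain ⟨n, hn⟩ := fire1 root h
    exact head_theta root hn
  · intro a b h
    obtain ⟨n, hn⟩ := fire1 root h
    exact head_theta root hn
  · intro i a φ j h₁ h₂
    obtain ⟨n, hn⟩ := fire2 root h₁ h₂
    rw [show step2 (Form.at1 i (Form.at2 a φ)) (Form.at1 i (Form.nom1 j)) (seq root n) =
        Form.at1 j (Form.at2 a φ) :: seq root n from by simp [step2]] at hn
    exact head_theta root hn
  · intro i a φ b h₁ h₂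
    obtain ⟨n, hn⟩ := fire2 root h₁ h₂
    rw [show step2 (Form.at1 i (Form.at2 a φ)) (Form.at2 a (Form.nom2 b)) (seq root n) =
        Form.at1 i (Form.at2 b φ) :: seq root n from by simp [step2]] at hn
    exact head_theta root hn
  · intro i k j h₁ h₂
    obtain ⟨n, hn⟩ := fire2 root h₁ h₂
    rw [show step2 (Form.at1 i (Form.nom1 k)) (Form.at1 i (Form.nom1 j)) (seq root n) =
        Form.at1 j (Form.nom1 k) :: seq root n from by simp [step2]] at hn
    exact head_theta root hn
  · intro i k j h₁ h₂
    obtain ⟨n, hn⟩ := fire2 root h₁ h₂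
    rw [show step2 (Form.at1 i (Form.neg (Form.nom1 k))) (Form.at1 i (Form.nom1 j))
        (seq root n) = Form.at1 j (Form.neg (Form.nom1 k)) :: seq root n from by
          simp [step2]] at hn
    exact head_theta root hn
  · intro a c b h₁ h₂
    obtain ⟨n, hn⟩ := fire2 root h₁ h₂
    rw [show step2 (Form.at2 a (Form.nom2 c)) (Form.at2 a (Form.nom2 b)) (seq root n) =
        Form.at2 b (Form.nom2 c) :: seq root n from by simp [step2]] at hn
    exact head_theta root hn
  · intro a c b h₁ h₂
    obtain ⟨n, hn⟩ := fire2 root h₁ h₂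
    rw [show step2 (Form.at2 a (Form.neg (Form.nom2 c))) (Form.at2 a (Form.nom2 b))
        (seq root n) = Form.at2 b (Form.neg (Form.nom2 c)) :: seq root n from by
          simp [step2]] at hn
    exact head_theta root hn
  · intro i a φ h₁ h₂
    refine theta_not_closedL root hroot
      (L := [Form.at1 i (Form.at2 a φ), Form.at1 i (Form.at2 a (Form.neg φ))]) ?_ ?_
    · intro ψ h
      rcases List.mem_cons.mp h with rfl | h
      · exact h₁
      · rcases List.mem_cons.mp h with rfl | h
        · exact h₂
        · cases h
    · exact Or.inl ⟨i, a, φ, by simp, by simp⟩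

end GoodTheta
section Model

variable (Θ : Set F)

/-- Nominal identification for the first sort. -/
def r1 (i j : ℕ) : Prop := Form.at1 i (Form.nom1 j) ∈ Θ

def r2 (a b : ℕ) : Prop := Form.at2 a (Form.nom2 b) ∈ Θ

/-- Two-step reachability (the class of targets of `i`). -/
def S1 (i k : ℕ) : Prop := ∃ c, r1 Θ i c ∧ r1 Θ c k

def S2 (a k : ℕ) : Prop := ∃ c, r2 Θ a c ∧ r2 Θ c k

open Classical in
/-- The urfather of a first-sort nominal. -/
noncomputable def u1 (i : ℕ) : ℕ := if h : ∃ k, S1 Θ i k then Nat.find h else i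

open Classical in
noncomputable def u2 (a : ℕ) : ℕ := if h : ∃ k, S2 Θ a k then Nat.find h else a

/-- The urfather model built from an open saturated branch. -/
noncomputable def model : ProductModel ℕ ℕ ℕ ℕ ℕ where
  R1 x y := ∃ j, u1 Θ j = y ∧ Form.at1 x (Form.dia1 (Form.nom1 j)) ∈ Θ
  R2 x y := ∃ b, u2 Θ b = y ∧ Form.at2 x (Form.dia2 (Form.nom2 b)) ∈ Θ
  V p w := Form.at1 w.1 (Form.at2 w.2 (Form.prop p)) ∈ Θ
  v1 := u1 Θ
  v2 := u2 Θ

variable {Θ} (hG : Good Θ)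
include hG

/- ## First sort equality lemmas -/

lemma r1_refl {i j : ℕ} (h : r1 Θ i j) : r1 Θ j j := hG.idp1a h h

lemma r1_move {i j k : ℕ} (h : r1 Θ i j) (h' : r1 Θ i k) : r1 Θ j k := hG.idp1a h' h

lemma S1_eq {i j : ℕ} (h : r1 Θ i j) : S1 Θ i = S1 Θ j := by
  funext k
  apply propext
  constructor
  · rintro ⟨c, hic, hck⟩
    exact ⟨c, r1_move hG h hic, hck⟩
  · rintro ⟨b, hjb, hbk⟩
    have hjj : r1 Θ j j := r1_refl hG h
    have hbj : r1 Θ b j := r1_move hG hjb hjj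
    exact ⟨j, h, r1_move hG hbj hbk⟩

lemma S1_nonempty {i j : ℕ} (h : r1 Θ i j) : ∃ k, S1 Θ i k :=
  ⟨j, j, h, r1_refl hG h⟩

omit hG in
lemma u1_spec {i : ℕ} (h : ∃ k, S1 Θ i k) : S1 Θ i (u1 Θ i) := by
  classical
  rw [u1, dif_pos h]
  exact Nat.find_spec h

omit hG in
lemma u1_eq_of_empty {i : ℕ} (h : ¬ ∃ k, S1 Θ i k) : u1 Θ i = i := by
  classical
  rw [u1, dif_neg h]

lemma u1_eq {i j : ℕ} (h : r1 Θ i j) : u1 Θ i = u1 Θ j := by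
  classical
  have hS := S1_eq hG h
  have hne : ∃ k, S1 Θ i k := S1_nonempty hG h
  have hne' : ∃ k, S1 Θ j k := hS ▸ hne
  unfold u1
  rw [dif_pos hne, dif_pos hne']
  have hiff : ∀ k, S1 Θ i k ↔ S1 Θ j k := fun k => by rw [hS]
  apply le_antisymm
  · exact Nat.find_le ((hiff _).mpr (Nat.find_spec hne'))
  · exact Nat.find_le ((hiff _).mp (Nat.find_spec hne))

lemma transfer1 {i a : ℕ} {ψ : F} (h : Form.at1 i (Form.at2 a ψ) ∈ Θ) :
    Form.at1 (u1 Θ i) (Form.at2 a ψ) ∈ Θ := by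
  by_cases he : ∃ k, S1 Θ i k
  · obtain ⟨c, hic, hcu⟩ := u1_spec he
    exact hG.id1 (hG.id1 h hic) hcu
  · rwa [u1_eq_of_empty he]

lemma transfer1neg {i k : ℕ} (h : Form.at1 i (Form.neg (Form.nom1 k)) ∈ Θ) :
    Form.at1 (u1 Θ i) (Form.neg (Form.nom1 k)) ∈ Θ := by
  by_cases he : ∃ k, S1 Θ i k
  · obtain ⟨c, hic, hcu⟩ := u1_spec he
    exact hG.idp1b (hG.idp1b h hic) hcu
  · rwa [u1_eq_of_empty he]

lemma u1_idem (i : ℕ) : u1 Θ (u1 Θ i) = u1 Θ i := by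
  by_cases he : ∃ k, S1 Θ i k
  · obtain ⟨c, hic, hcu⟩ := u1_spec he
    rw [← u1_eq hG hcu, ← u1_eq hG hic]
  · rw [u1_eq_of_empty he, u1_eq_of_empty he]

lemma u1_ne {i j : ℕ} (h : Form.at1 i (Form.neg (Form.nom1 j)) ∈ Θ) : u1 Θ i ≠ u1 Θ j := by
  intro heq
  have hjj : r1 Θ j j := hG.neg1 h
  have hSj : ∃ k, S1 Θ j k := ⟨j, j, hjj, hjj⟩
  obtain ⟨b, hjb, hbu⟩ := u1_spec hSj
  have hbj : r1 Θ b j := r1_move hG hjb hjj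
  have huj : r1 Θ (u1 Θ j) j := r1_move hG hbu hbj
  have hn : Form.at1 (u1 Θ i) (Form.neg (Form.nom1 j)) ∈ Θ := transfer1neg hG h
  rw [heq] at hn
  exact hG.open1 huj hn

/- ## Second sort equality lemmas -/

lemma r2_refl {a b : ℕ} (h : r2 Θ a b) : r2 Θ b b := hG.idp2a h h

lemma r2_move {a b c : ℕ} (h : r2 Θ a b) (h' : r2 Θ a c) : r2 Θ b c := hG.idp2a h' h

lemma S2_eq {a b : ℕ} (h : r2 Θ a b) : S2 Θ a = S2 Θ b := by
  funext k
  apply propext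
  constructor
  · rintro ⟨c, hic, hck⟩
    exact ⟨c, r2_move hG h hic, hck⟩
  · rintro ⟨c, hjb, hbk⟩
    have hjj : r2 Θ b b := r2_refl hG h
    have hbj : r2 Θ c b := r2_move hG hjb hjj
    exact ⟨b, h, r2_move hG hbj hbk⟩

lemma S2_nonempty {a b : ℕ} (h : r2 Θ a b) : ∃ k, S2 Θ a k :=
  ⟨b, b, h, r2_refl hG h⟩

omit hG in
lemma u2_spec {a : ℕ} (h : ∃ k, S2 Θ a k) : S2 Θ a (u2 Θ a) := by
  classical
  rw [u2, dif_pos h]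
  exact Nat.find_spec h

omit hG in
lemma u2_eq_of_empty {a : ℕ} (h : ¬ ∃ k, S2 Θ a k) : u2 Θ a = a := by
  classical
  rw [u2, dif_neg h]

lemma u2_eq {a b : ℕ} (h : r2 Θ a b) : u2 Θ a = u2 Θ b := by
  classical
  have hS := S2_eq hG h
  have hne : ∃ k, S2 Θ a k := S2_nonempty hG h
  have hne' : ∃ k, S2 Θ b k := hS ▸ hne
  unfold u2
  rw [dif_pos hne, dif_pos hne']
  have hiff : ∀ k, S2 Θ a k ↔ S2 Θ b k := fun k => by rw [hS]
  apply le_antisymm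
  · exact Nat.find_le ((hiff _).mpr (Nat.find_spec hne'))
  · exact Nat.find_le ((hiff _).mp (Nat.find_spec hne))

lemma transfer2 {i a : ℕ} {ψ : F} (h : Form.at1 i (Form.at2 a ψ) ∈ Θ) :
    Form.at1 i (Form.at2 (u2 Θ a) ψ) ∈ Θ := by
  by_cases he : ∃ k, S2 Θ a k
  · obtain ⟨c, hic, hcu⟩ := u2_spec he
    exact hG.id2 (hG.id2 h hic) hcu
  · rwa [u2_eq_of_empty he]

lemma transfer2neg {a c : ℕ} (h : Form.at2 a (Form.neg (Form.nom2 c)) ∈ Θ) :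
    Form.at2 (u2 Θ a) (Form.neg (Form.nom2 c)) ∈ Θ := by
  by_cases he : ∃ k, S2 Θ a k
  · obtain ⟨d, hic, hcu⟩ := u2_spec he
    exact hG.idp2b (hG.idp2b h hic) hcu
  · rwa [u2_eq_of_empty he]

lemma u2_idem (a : ℕ) : u2 Θ (u2 Θ a) = u2 Θ a := by
  by_cases he : ∃ k, S2 Θ a k
  · obtain ⟨c, hic, hcu⟩ := u2_spec he
    rw [← u2_eq hG hcu, ← u2_eq hG hic]
  · rw [u2_eq_of_empty he, u2_eq_of_empty he]

lemma u2_ne {a b : ℕ} (h : Form.at2 a (Form.neg (Form.nom2 b)) ∈ Θ) : u2 Θ a ≠ u2 Θ b := by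
  intro heq
  have hjj : r2 Θ b b := hG.neg2 h
  have hSj : ∃ k, S2 Θ b k := ⟨b, b, hjj, hjj⟩
  obtain ⟨c, hjb, hbu⟩ := u2_spec hSj
  have hbj : r2 Θ c b := r2_move hG hjb hjj
  have huj : r2 Θ (u2 Θ b) b := r2_move hG hbu hbj
  have hn : Form.at2 (u2 Θ a) (Form.neg (Form.nom2 b)) ∈ Θ := transfer2neg hG h
  rw [heq] at hn
  exact hG.open2 huj hn

/-- Transfer of a satisfaction statement to the urfather pair. -/
lemma transferU {i a : ℕ} {ψ : F} (h : Form.at1 i (Form.at2 a ψ) ∈ Θ) :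
    Form.at1 (u1 Θ i) (Form.at2 (u2 Θ a) ψ) ∈ Θ :=
  transfer2 hG (transfer1 hG h)

/- ## The truth lemma -/

lemma truth (φ : F) :
    (∀ i a, Form.at1 i (Form.at2 a φ) ∈ Θ → (model Θ).sat (u1 Θ i, u2 Θ a) φ) ∧
    (∀ i a, Form.at1 i (Form.at2 a (Form.neg φ)) ∈ Θ →
      ¬ (model Θ).sat (u1 Θ i, u2 Θ a) φ) := by
  induction φ with
  | prop p =>
      constructor
      · intro i a h
        exact transferU hG h
      · intro i a h hs
        exact hG.open0 (hs : (model Θ).V p (u1 Θ i, u2 Θ a)) (transferU hG h)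
  | nom1 j =>
      constructor
      · intro i a h
        exact u1_eq hG (hG.red1a h)
      · intro i a h hs
        exact u1_ne hG (hG.red1b h) hs
  | nom2 b =>
      constructor
      · intro i a h
        exact u2_eq hG (hG.red2a h)
      · intro i a h hs
        exact u2_ne hG (hG.red2b h) hs
  | neg ψ ih =>
      constructor
      · intro i a h
        exact ih.2 i a h
      · intro i a h hs
        exact hs (ih.1 i a (hG.negneg h))
  | and ψ χ ih₁ ih₂ =>
      constructor
      · intro i a h
        obtain ⟨h₁, h₂⟩ := hG.andR h
        exact ⟨ih₁.1 i a h₁, ih₂.1 i a h₂⟩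
      · intro i a h hs
        obtain ⟨s₁, s₂⟩ := hs
        rcases hG.negand h with h' | h'
        · exact ih₁.2 i a h' s₁
        · exact ih₂.2 i a h' s₂
  | dia1 ψ ih =>
      constructor
      · intro i a h
        obtain ⟨j, hedge, hform⟩ := hG.dia1R (transferU hG h)
        refine ⟨(u1 Θ j, u2 Θ (u2 Θ a)), ⟨⟨j, rfl, hedge⟩, (u2_idem hG a).symm⟩,
          ih.1 j (u2 Θ a) hform⟩
      · intro i a h hs
        obtain ⟨w', ⟨hR, h2⟩, hsψ⟩ := hs
        obtain ⟨j, hj, hedge⟩ := hR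
        have hn := hG.negDia1 (transferU hG h) hedge
        have := ih.2 j (u2 Θ a) hn
        rw [u2_idem hG a, hj] at this
        apply this
        have h2' : u2 Θ a = w'.2 := h2
        have hw : w' = (w'.1, u2 Θ a) := by rw [h2']
        rwa [← hw]
  | dia2 ψ ih =>
      constructor
      · intro i a h
        obtain ⟨b, hedge, hform⟩ := hG.dia2R (transferU hG h)
        refine ⟨(u1 Θ (u1 Θ i), u2 Θ b), ⟨(u1_idem hG i).symm, ⟨b, rfl, hedge⟩⟩,
          ?_⟩
        have := ih.1 (u1 Θ i) b hform
        rwa [u1_idem hG i] at this ⊢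
      · intro i a h hs
        obtain ⟨w', ⟨h1, hR⟩, hsψ⟩ := hs
        obtain ⟨b, hb, hedge⟩ := hR
        have hn := hG.negDia2 (transferU hG h) hedge
        have := ih.2 (u1 Θ i) b hn
        rw [u1_idem hG i, hb] at this
        apply this
        have h1' : u1 Θ i = w'.1 := h1
        have hw : w' = (u1 Θ i, w'.2) := by rw [h1']
        rwa [← hw]
  | at1 j ψ ih =>
      constructor
      · intro i a h
        exact ih.1 j a (hG.at1R h)
      · intro i a h hs
        exact ih.2 j a (hG.negAt1 h) hs
  | at2 b ψ ih =>
      constructor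
      · intro i a h
        exact ih.1 i b (hG.at2R h)
      · intro i a h hs
        exact ih.2 i b (hG.negAt2 h) hs

end Model
/-- completeness of the HPL tableau calculus: if `φ` is valid
on all product Kripke frames, then there is a closed tableau with root
formula `@ᵢ@ₐ¬φ` for fresh nominals `i`, `a` (not occurring in `φ`). -/
theorem tableau_completeness (φ : F)
    (hvalid : ∀ (W1 W2 : Type) (M : ProductModel ℕ ℕ ℕ W1 W2) (w : W1 × W2),
      M.sat w φ) :
    ∃ i a : ℕ, ¬ occ1 i φ ∧ ¬ occ2 a φ ∧
      ClosedTab [Form.at1 i (Form.at2 a (Form.neg φ))] := by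
  refine ⟨bound1 φ, bound2 φ,
    fun h => absurd (occ1_lt_bound1 h) (lt_irrefl _),
    fun h => absurd (occ2_lt_bound2 h) (lt_irrefl _), ?_⟩
  by_contra hct
  set root : F := Form.at1 (bound1 φ) (Form.at2 (bound2 φ) (Form.neg φ)) with hrootdef
  have hroot : root ∈ theta root := ⟨0, List.mem_cons_self⟩
  have hG : Good (theta root) := good_theta root hct
  have hfalse := (truth hG φ).2 (bound1 φ) (bound2 φ) hroot
  exact hfalse (hvalid ℕ ℕ (model (theta root)) _)
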